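/- Let P_τ = C ⊔ O be a k-decomposition of a maximal ranked poset with k ≥ 1, b ∈ Y^i for some 1 ≤ i ≤ k with τ_i ≥ 2, and F the face of O_{C,O}(τ) given by x_b = 0. Then the coordinate projection forgetting x_b is an affine isomorphism from F onto the chain-order polytope O_{C̃,O}(τ̃) where τ̃ = (τ_1,…,τ_{i−1}, τ_i − 1, τ_{i+1},…,τ_ℓ) and C̃ = C \ {b}. -/

import Mathlib

/-- The underlying set of the maximal ranked poset `P_τ`: the disjoint union
of rank sets `Y^i` with `|Y^i| = τ i`. -/
abbrev MaxRanked (ℓ : ℕ) (τ : Fin ℓ → ℕ) := Σ i : Fin ℓ, Fin (τ i)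

/-- The order of the maximal ranked poset: `x < y` iff `rank x < rank y`. -/
instance MaxRanked.instPartialOrder (ℓ : ℕ) (τ : Fin ℓ → ℕ) :
    PartialOrder (MaxRanked ℓ τ) where
  le x y := x = y ∨ x.1 < y.1
  lt x y := x.1 < y.1
  le_refl x := Or.inl rfl
  le_trans x y z hxy hyz := by
    rcases hxy with rfl | h
    · exact hyz
    · rcases hyz with rfl | h'
      · exact Or.inr h
      · exact Or.inr (h.trans h')
  lt_iff_le_not_ge x y := by
    constructor
    · intro h
      refine ⟨Or.inr h, ?_⟩
      rintro (rfl | h')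
      · exact absurd h (lt_irrefl y.1)
      · exact absurd (h.trans h') (lt_irrefl x.1)
    · rintro ⟨rfl | h, hn⟩
      · exact absurd (Or.inl rfl) hn
      · exact h
  le_antisymm x y hxy hyx := by
    rcases hxy with rfl | h
    · rfl
    · rcases hyx with rfl | h'
      · rfl
      · exact absurd (h.trans h') (lt_irrefl x.1)

/-- The chain-order polytope `O_{C,O}(τ)` of the `k`-decomposition of the
maximal ranked poset `P_τ` (ranks are indexed by `Fin ℓ`, so the paper's rank
`i` corresponds to index `i - 1`; the chain part `C` consists of the ranks
with index `< k`, together with `0̂`, and the order part `O` of the remaining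
ranks together with `1̂`; the coordinates of `0̂` and `1̂` are fixed to `0`
and `1`). -/
def chainOrderPolytope (ℓ : ℕ) (τ : Fin ℓ → ℕ) (k : ℕ) :
    Set (MaxRanked ℓ τ → ℝ) :=
  {x | (∀ p : MaxRanked ℓ τ, (p.1 : ℕ) < k → 0 ≤ x p) ∧
    (∀ p q : MaxRanked ℓ τ, k ≤ (p.1 : ℕ) → (q.1 : ℕ) = (p.1 : ℕ) + 1 →
      x p ≤ x q) ∧
    (∀ p : MaxRanked ℓ τ, k ≤ (p.1 : ℕ) → (p.1 : ℕ) = ℓ - 1 → x p ≤ 1) ∧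
    (∀ (c : ∀ i : Fin ℓ, Fin (τ i)) (q : MaxRanked ℓ τ), (q.1 : ℕ) = k →
      ∑ i ∈ Finset.univ.filter (fun i : Fin ℓ => (i : ℕ) < k),
        x ⟨i, c i⟩ ≤ x q) ∧
    (k = ℓ → ∀ c : ∀ i : Fin ℓ, Fin (τ i), ∑ i : Fin ℓ, x ⟨i, c i⟩ ≤ 1)}

private lemma sigma_cast_eq {ℓ : ℕ} {σ : Fin ℓ → ℕ} (q : Σ i : Fin ℓ, Fin (σ i)) (i : Fin ℓ)
    (h : q.1 = i) : (⟨i, Fin.cast (congrArg σ h) q.2⟩ : Σ i : Fin ℓ, Fin (σ i)) = q := by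
  subst h; rfl

/-- Let `b` be an element of rank `i ≤ k` (index `b.1 < k`) of `P_τ` with
`τ_i ≥ 2`, and let `F` be the face of the chain-order polytope of the
`k`-decomposition given by `x_b = 0`.  Then the coordinate projection
forgetting `x_b` (realized via any rank-preserving identification `j` of
`P_τ̃` with `P_τ \ {b}`, where `τ̃` is `τ` with the `i`-th entry decreased by
one) is an affine isomorphism from `F` onto the chain-order polytope
`O_{C̃,O}(τ̃)`. -/
theorem face_zero_coordinate_iso (ℓ : ℕ) (τ : Fin ℓ → ℕ) (hτ : ∀ i, 0 < τ i)
    (k : ℕ) (hk : k ≤ ℓ) (b : MaxRanked ℓ τ) (hbk : (b.1 : ℕ) < k)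
    (hb2 : 2 ≤ τ b.1)
    (j : MaxRanked ℓ (Function.update τ b.1 (τ b.1 - 1)) → MaxRanked ℓ τ)
    (hj : Function.Injective j)
    (hjrank : ∀ p, (j p).1 = p.1)
    (hjrange : Set.range j = {q : MaxRanked ℓ τ | q ≠ b}) :
    Set.BijOn (fun x : MaxRanked ℓ τ → ℝ => x ∘ j)
      {x ∈ chainOrderPolytope ℓ τ k | x b = 0}
      (chainOrderPolytope ℓ (Function.update τ b.1 (τ b.1 - 1)) k) := by
  have hτ' : ∀ i, 0 < Function.update τ b.1 (τ b.1 - 1) i := by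
    intro i
    by_cases h : i = b.1
    · subst h
      simp only [Function.update_self]
      omega
    · simpa only [Function.update_of_ne h] using hτ i
  have hjne : ∀ p, j p ≠ b := by
    intro p
    have : j p ∈ Set.range j := ⟨p, rfl⟩
    rw [hjrange] at this
    exact this
  have hex : ∀ q : MaxRanked ℓ τ, q ≠ b → ∃ p, j p = q := by
    intro q hq
    have : q ∈ Set.range j := by rw [hjrange]; exact hq
    exact this
  choose g hg using hex
  have hgrank : ∀ q hq, (g q hq).1 = q.1 := fun q hq =>
    (hjrank (g q hq)).symm.trans (congrArg Sigma.fst (hg q hq))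
  refine ⟨?_, ?_, ?_⟩
  · -- MapsTo
    rintro x ⟨⟨h1, h2, h3, h4, h5⟩, hxb⟩
    refine ⟨?_, ?_, ?_, ?_, ?_⟩
    · intro p hp
      exact h1 (j p) (by rw [hjrank]; exact hp)
    · intro p q hp hq
      exact h2 (j p) (j q) (by rw [hjrank]; exact hp) (by rw [hjrank, hjrank]; exact hq)
    · intro p hp hp'
      exact h3 (j p) (by rw [hjrank]; exact hp) (by rw [hjrank]; exact hp')
    · intro c' q' hq'
      have hc : ∀ i : Fin ℓ,
          (⟨i, Fin.cast (congrArg τ (hjrank ⟨i, c' i⟩)) (j ⟨i, c' i⟩).2⟩ : MaxRanked ℓ τ)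
            = j ⟨i, c' i⟩ := fun i => sigma_cast_eq (j ⟨i, c' i⟩) i (hjrank ⟨i, c' i⟩)
      calc ∑ i ∈ Finset.univ.filter (fun i : Fin ℓ => (i : ℕ) < k),
              (x ∘ j) ⟨i, c' i⟩
          = ∑ i ∈ Finset.univ.filter (fun i : Fin ℓ => (i : ℕ) < k),
              x ⟨i, Fin.cast (congrArg τ (hjrank ⟨i, c' i⟩)) (j ⟨i, c' i⟩).2⟩ := by
            refine Finset.sum_congr rfl fun i _ => ?_
            exact congrArg x (hc i).symm
        _ ≤ x (j q') := h4 _ (j q') (by rw [hjrank]; exact hq')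
    · intro hkl c'
      have hc : ∀ i : Fin ℓ,
          (⟨i, Fin.cast (congrArg τ (hjrank ⟨i, c' i⟩)) (j ⟨i, c' i⟩).2⟩ : MaxRanked ℓ τ)
            = j ⟨i, c' i⟩ := fun i => sigma_cast_eq (j ⟨i, c' i⟩) i (hjrank ⟨i, c' i⟩)
      calc ∑ i : Fin ℓ, (x ∘ j) ⟨i, c' i⟩
          = ∑ i : Fin ℓ,
              x ⟨i, Fin.cast (congrArg τ (hjrank ⟨i, c' i⟩)) (j ⟨i, c' i⟩).2⟩ := by
            refine Finset.sum_congr rfl fun i _ => ?_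
            exact congrArg x (hc i).symm
        _ ≤ 1 := h5 hkl _
  · -- InjOn
    rintro x1 ⟨hx1, hxb1⟩ x2 ⟨hx2, hxb2⟩ heq
    funext q
    by_cases hq : q = b
    · rw [hq, hxb1, hxb2]
    · have := congrFun heq (g q hq)
      simpa only [Function.comp_apply, hg q hq] using this
  · -- SurjOn
    rintro y ⟨h1, h2, h3, h4, h5⟩
    refine ⟨fun q => if hq : q = b then (0 : ℝ) else y (g q hq), ⟨⟨?_, ?_, ?_, ?_, ?_⟩, ?_⟩, ?_⟩
    · intro p hp
      by_cases hq : p = b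
      · simp only [dif_pos hq]; exact le_refl 0
      · simp only [dif_neg hq]
        exact h1 (g p hq) (by rw [hgrank p hq]; exact hp)
    · intro p q hp hq
      have hpb : p ≠ b := by rintro rfl; omega
      have hqb : q ≠ b := by
        rintro rfl
        omega
      simp only [dif_neg hpb, dif_neg hqb]
      exact h2 (g p hpb) (g q hqb) (by rw [hgrank]; exact hp)
        (by rw [hgrank, hgrank]; exact hq)
    · intro p hp hp'
      have hpb : p ≠ b := by rintro rfl; omega
      simp only [dif_neg hpb]
      exact h3 (g p hpb) (by rw [hgrank]; exact hp) (by rw [hgrank]; exact hp')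
    · intro c q hq
      have hqb : q ≠ b := by rintro rfl; omega
      set c' : ∀ i : Fin ℓ, Fin (Function.update τ b.1 (τ b.1 - 1) i) := fun i =>
        if h : (⟨i, c i⟩ : MaxRanked ℓ τ) = b then ⟨0, hτ' i⟩
        else Fin.cast (congrArg (Function.update τ b.1 (τ b.1 - 1)) (hgrank ⟨i, c i⟩ h)) (g ⟨i, c i⟩ h).2 with hc'def
      have key : ∀ i ∈ Finset.univ.filter (fun i : Fin ℓ => (i : ℕ) < k),
          (if h : (⟨i, c i⟩ : MaxRanked ℓ τ) = b then (0 : ℝ) else y (g ⟨i, c i⟩ h))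
            ≤ y ⟨i, c' i⟩ := by
        intro i hi
        simp only [Finset.mem_filter] at hi
        by_cases h : (⟨i, c i⟩ : MaxRanked ℓ τ) = b
        · simp only [dif_pos h]
          exact h1 ⟨i, c' i⟩ hi.2
        · simp only [dif_neg h]
          refine le_of_eq ?_
          congr 1
          rw [hc'def]
          simp only [dif_neg h]
          exact (sigma_cast_eq (g ⟨i, c i⟩ h) i (hgrank ⟨i, c i⟩ h)).symm
      calc ∑ i ∈ Finset.univ.filter (fun i : Fin ℓ => (i : ℕ) < k),
              (if h : (⟨i, c i⟩ : MaxRanked ℓ τ) = b then (0 : ℝ) else y (g ⟨i, c i⟩ h))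
          ≤ ∑ i ∈ Finset.univ.filter (fun i : Fin ℓ => (i : ℕ) < k), y ⟨i, c' i⟩ :=
            Finset.sum_le_sum key
        _ ≤ y (g q hqb) := h4 c' (g q hqb) (by rw [hgrank]; exact hq)
        _ = _ := by simp only [dif_neg hqb]
    · intro hkl c
      set c' : ∀ i : Fin ℓ, Fin (Function.update τ b.1 (τ b.1 - 1) i) := fun i =>
        if h : (⟨i, c i⟩ : MaxRanked ℓ τ) = b then ⟨0, hτ' i⟩
        else Fin.cast (congrArg (Function.update τ b.1 (τ b.1 - 1)) (hgrank ⟨i, c i⟩ h)) (g ⟨i, c i⟩ h).2 with hc'def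
      have key : ∀ i ∈ (Finset.univ : Finset (Fin ℓ)),
          (if h : (⟨i, c i⟩ : MaxRanked ℓ τ) = b then (0 : ℝ) else y (g ⟨i, c i⟩ h))
            ≤ y ⟨i, c' i⟩ := by
        intro i _
        by_cases h : (⟨i, c i⟩ : MaxRanked ℓ τ) = b
        · simp only [dif_pos h]
          exact h1 ⟨i, c' i⟩ (by rw [hkl]; exact i.isLt)
        · simp only [dif_neg h]
          refine le_of_eq ?_
          congr 1
          rw [hc'def]
          simp only [dif_neg h]
          exact (sigma_cast_eq (g ⟨i, c i⟩ h) i (hgrank ⟨i, c i⟩ h)).symm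
      calc ∑ i : Fin ℓ,
              (if h : (⟨i, c i⟩ : MaxRanked ℓ τ) = b then (0 : ℝ) else y (g ⟨i, c i⟩ h))
          ≤ ∑ i : Fin ℓ, y ⟨i, c' i⟩ := Finset.sum_le_sum key
        _ ≤ 1 := h5 hkl c'
    · exact dif_pos rfl
    · funext p
      simp only [Function.comp_apply]
      simp only [dif_neg (hjne p)]
      have : g (j p) (hjne p) = p := hj (hg _ _)
      rw [this]
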